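/- Let k ≥ 1 and n ≥ 1. Then M_k(n) = Σ_{i=1}^{n−1} Σ_{j=1}^{n−i} u_i·u_j·k^{2n−2(i+j)} + Σ_{p=1}^{⌊n/3⌋} Σ_{(x,y)} Σ_{l=2p}^{n−p} G_{y,x}(l)·G_{x,y}(n−l+p), where the middle sum in the second term is over all ordered pairs (x,y) of distinct words of length p over Σ_k such that (x,y) is mutually unbordered, and M_k(1) = 0. -/

import Mathlib

open Classical Finset Filter

/-- A border of `w`: a non-empty word that is both a proper prefix and a suffix of `w`. -/
def IsBorder {k : ℕ} (w b : List (Fin k)) : Prop :=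
  b ≠ [] ∧ b ≠ w ∧ b <+: w ∧ b <:+ w

/-- A word is unbordered if it has no border. -/
def Unbordered {k : ℕ} (w : List (Fin k)) : Prop :=
  ∀ b, ¬ IsBorder w b

/-- A right-border of `(u,v)`: a non-empty proper suffix of `u` that is a proper prefix of `v`. -/
def IsRightBorder {k : ℕ} (u v b : List (Fin k)) : Prop :=
  b ≠ [] ∧ b <:+ u ∧ b ≠ u ∧ b <+: v ∧ b ≠ v

/-- A left-border of `(u,v)`: a non-empty proper prefix of `u` that is a proper suffix of `v`. -/
def IsLeftBorder {k : ℕ} (u v b : List (Fin k)) : Prop :=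
  b ≠ [] ∧ b <+: u ∧ b ≠ u ∧ b <:+ v ∧ b ≠ v

def MutuallyBordered {k : ℕ} (u v : List (Fin k)) : Prop :=
  (∃ b, IsRightBorder u v b) ∧ (∃ b, IsLeftBorder u v b)

def MutuallyUnbordered {k : ℕ} (u v : List (Fin k)) : Prop :=
  (¬ ∃ b, IsRightBorder u v b) ∧ (¬ ∃ b, IsLeftBorder u v b)

def RightBordered {k : ℕ} (u v : List (Fin k)) : Prop :=
  (∃ b, IsRightBorder u v b) ∧ (¬ ∃ b, IsLeftBorder u v b)

/-- `lso u v`: the length of the shortest right-border of `(u,v)`, or `0` if there is none. -/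
noncomputable def lso {k : ℕ} (u v : List (Fin k)) : ℕ :=
  sInf {m | ∃ b : List (Fin k), IsRightBorder u v b ∧ b.length = m}

def IsShortestRightBorder {k : ℕ} (u v b : List (Fin k)) : Prop :=
  IsRightBorder u v b ∧ ∀ b', IsRightBorder u v b' → b.length ≤ b'.length

def IsShortestLeftBorder {k : ℕ} (u v b : List (Fin k)) : Prop :=
  IsLeftBorder u v b ∧ ∀ b', IsLeftBorder u v b' → b.length ≤ b'.length

/-- The finite set of all length-`n` words over `Σ_k`. -/
def Words (k n : ℕ) : Finset (List (Fin k)) :=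
  (Finset.univ : Finset (Fin n → Fin k)).image List.ofFn

/-- `UB k n`: the number of unbordered words of length `n` over `Σ_k`. -/
noncomputable def UB (k n : ℕ) : ℕ :=
  ((Words k n).filter Unbordered).card

/-- `M k n`: the number of mutually bordered pairs of length-`n` words over `Σ_k`. -/
noncomputable def M (k n : ℕ) : ℕ :=
  ((Words k n ×ˢ Words k n).filter (fun p => MutuallyBordered p.1 p.2)).card

/-- `R k n`: the number of right-bordered pairs of length-`n` words over `Σ_k`. -/
noncomputable def R (k n : ℕ) : ℕ :=
  ((Words k n ×ˢ Words k n).filter (fun p => RightBordered p.1 p.2)).card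

/-- `U k n`: the number of mutually unbordered pairs of length-`n` words over `Σ_k`. -/
noncomputable def U (k n : ℕ) : ℕ :=
  ((Words k n ×ˢ Words k n).filter (fun p => MutuallyUnbordered p.1 p.2)).card

/-- `G u v m`: the number of unbordered words of length `m` over `Σ_k` having
`u` as a prefix and `v` as a suffix. -/
noncomputable def G {k : ℕ} (u v : List (Fin k)) (m : ℕ) : ℕ :=
  ((Words k m).filter (fun w => Unbordered w ∧ u <+: w ∧ v <:+ w)).card

namespace Aux

variable {k : ℕ}

lemma mem_words {n : ℕ} {w : List (Fin k)} : w ∈ Words k n ↔ w.length = n := by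
  simp only [Words, Finset.mem_image, Finset.mem_univ, true_and]
  constructor
  · rintro ⟨f, rfl⟩; simp
  · intro h; subst h; exact ⟨w.get, List.ofFn_get w⟩

lemma card_words (n : ℕ) : (Words k n).card = k ^ n := by
  rw [Words, Finset.card_image_of_injective _ List.ofFn_injective, Finset.card_univ]
  simp

/-- choose a shortest right border -/
noncomputable def srb (u v : List (Fin k)) : List (Fin k) :=
  if h : ∃ b, IsRightBorder u v b then
    (Nat.sInf_mem (⟨h.choose.length, h.choose, h.choose_spec, rfl⟩ :
      {m | ∃ b : List (Fin k), IsRightBorder u v b ∧ b.length = m}.Nonempty)).choose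
  else []

noncomputable def slb (u v : List (Fin k)) : List (Fin k) :=
  if h : ∃ b, IsLeftBorder u v b then
    (Nat.sInf_mem (⟨h.choose.length, h.choose, h.choose_spec, rfl⟩ :
      {m | ∃ b : List (Fin k), IsLeftBorder u v b ∧ b.length = m}.Nonempty)).choose
  else []

lemma srb_spec {u v : List (Fin k)} (h : ∃ b, IsRightBorder u v b) :
    IsShortestRightBorder u v (srb u v) := by
  rw [srb, dif_pos h]
  set S := {m | ∃ b : List (Fin k), IsRightBorder u v b ∧ b.length = m} with hS
  have hne : S.Nonempty := ⟨h.choose.length, h.choose, h.choose_spec, rfl⟩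
  obtain ⟨hb, hlen⟩ := (Nat.sInf_mem hne).choose_spec
  exact ⟨hb, fun b' hb' => by rw [hlen]; exact Nat.sInf_le ⟨b', hb', rfl⟩⟩

lemma slb_spec {u v : List (Fin k)} (h : ∃ b, IsLeftBorder u v b) :
    IsShortestLeftBorder u v (slb u v) := by
  rw [slb, dif_pos h]
  set S := {m | ∃ b : List (Fin k), IsLeftBorder u v b ∧ b.length = m} with hS
  have hne : S.Nonempty := ⟨h.choose.length, h.choose, h.choose_spec, rfl⟩
  obtain ⟨hb, hlen⟩ := (Nat.sInf_mem hne).choose_spec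
  exact ⟨hb, fun b' hb' => by rw [hlen]; exact Nat.sInf_le ⟨b', hb', rfl⟩⟩

/-- shorter right borders are borders of any right border that is both suffix/prefix -/
lemma rb_border_of_lt {u v x b : List (Fin k)} (hxu : x <:+ u) (hxv : x <+: v)
    (hb : IsRightBorder u v b) (hlt : b.length < x.length) : IsBorder x b := by
  obtain ⟨hb0, hbu, _, hbv, _⟩ := hb
  exact ⟨hb0, fun h => absurd (congrArg List.length h) hlt.ne,
    List.prefix_of_prefix_length_le hbv hxv hlt.le,
    List.suffix_of_suffix_length_le hbu hxu hlt.le⟩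

lemma lb_border_of_lt {u v x b : List (Fin k)} (hxu : x <+: u) (hxv : x <:+ v)
    (hb : IsLeftBorder u v b) (hlt : b.length < x.length) : IsBorder x b := by
  obtain ⟨hb0, hbu, _, hbv, _⟩ := hb
  exact ⟨hb0, fun h => absurd (congrArg List.length h) hlt.ne,
    List.prefix_of_prefix_length_le hbu hxu hlt.le,
    List.suffix_of_suffix_length_le hbv hxv hlt.le⟩

lemma shortest_rb_of_unbordered {u v x : List (Fin k)} (hx : IsRightBorder u v x)
    (hux : Unbordered x) : IsShortestRightBorder u v x :=
  ⟨hx, fun b hb => not_lt.1 fun hlt => hux b (rb_border_of_lt hx.2.1 hx.2.2.2.1 hb hlt)⟩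

lemma shortest_lb_of_unbordered {u v x : List (Fin k)} (hx : IsLeftBorder u v x)
    (hux : Unbordered x) : IsShortestLeftBorder u v x :=
  ⟨hx, fun b hb => not_lt.1 fun hlt => hux b (lb_border_of_lt hx.2.1 hx.2.2.2.1 hb hlt)⟩

lemma unbordered_of_shortest_rb {u v x : List (Fin k)} (h : IsShortestRightBorder u v x) :
    Unbordered x := by
  rintro c ⟨hc0, hcx, hcp, hcs⟩
  have hclt : c.length < x.length :=
    lt_of_le_of_ne hcp.length_le (fun hl => hcx (hcp.eq_of_length hl))
  have hcrb : IsRightBorder u v c := by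
    obtain ⟨h0, hsu, hnu, hpv, hnv⟩ := h.1
    refine ⟨hc0, hcs.trans hsu, ?_, hcp.trans hpv, ?_⟩
    · rintro rfl; exact absurd hclt (not_lt.2 hsu.length_le)
    · rintro rfl; exact absurd hclt (not_lt.2 hpv.length_le)
  exact absurd (h.2 c hcrb) (not_le.2 hclt)

lemma unbordered_of_shortest_lb {u v x : List (Fin k)} (h : IsShortestLeftBorder u v x) :
    Unbordered x := by
  rintro c ⟨hc0, hcx, hcp, hcs⟩
  have hclt : c.length < x.length :=
    lt_of_le_of_ne hcp.length_le (fun hl => hcx (hcp.eq_of_length hl))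
  have hcrb : IsLeftBorder u v c := by
    obtain ⟨h0, hpu, hnu, hsv, hnv⟩ := h.1
    refine ⟨hc0, hcp.trans hpu, ?_, hcs.trans hsv, ?_⟩
    · rintro rfl; exact absurd hclt (not_lt.2 hpu.length_le)
    · rintro rfl; exact absurd hclt (not_lt.2 hsv.length_le)
  exact absurd (h.2 c hcrb) (not_le.2 hclt)

lemma shortest_rb_unique {u v x y : List (Fin k)} (hx : IsShortestRightBorder u v x)
    (hy : IsShortestRightBorder u v y) : x = y := by
  have hl : x.length = y.length := le_antisymm (hx.2 y hy.1) (hy.2 x hx.1)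
  exact (List.suffix_of_suffix_length_le hx.1.2.1 hy.1.2.1 hl.le).eq_of_length hl

lemma shortest_lb_unique {u v x y : List (Fin k)} (hx : IsShortestLeftBorder u v x)
    (hy : IsShortestLeftBorder u v y) : x = y := by
  have hl : x.length = y.length := le_antisymm (hx.2 y hy.1) (hy.2 x hx.1)
  exact (List.prefix_of_prefix_length_le hx.1.2.1 hy.1.2.1 hl.le).eq_of_length hl

lemma srb_eq {u v x : List (Fin k)} (hx : IsRightBorder u v x) (hux : Unbordered x) :
    srb u v = x :=
  shortest_rb_unique (srb_spec ⟨x, hx⟩) (shortest_rb_of_unbordered hx hux)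

lemma slb_eq {u v x : List (Fin k)} (hx : IsLeftBorder u v x) (hux : Unbordered x) :
    slb u v = x :=
  shortest_lb_unique (slb_spec ⟨x, hx⟩) (shortest_lb_of_unbordered hx hux)


lemma recompose {n m : ℕ} {u x y : List (Fin k)} (hu : u.length = n) (hyu : y <+: u)
    (hxu : x <:+ u) (hm : y.length + m + x.length = n) :
    y ++ (u.drop y.length).take m ++ x = u := by
  obtain ⟨s, rfl⟩ := hyu
  rw [List.drop_left]
  have hxs : x <:+ s := by
    refine List.suffix_of_suffix_length_le hxu (List.suffix_append y s) ?_
    simp only [List.length_append] at hu; omega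
  obtain ⟨t, rfl⟩ := hxs
  have ht : t.length = m := by
    simp only [List.length_append] at hu; omega
  rw [List.take_left' ht, List.append_assoc]

noncomputable def TA (k n : ℕ) :
    Finset (Σ _ : ℕ, Σ _ : ℕ, List (Fin k) × List (Fin k) × List (Fin k) × List (Fin k)) :=
  (Finset.Icc 1 (n-1)).sigma fun i => (Finset.Icc 1 (n-i)).sigma fun j =>
    ((Words k i).filter Unbordered) ×ˢ ((Words k j).filter Unbordered) ×ˢ
      Words k (n-i-j) ×ˢ Words k (n-i-j)

noncomputable def FA (n : ℕ) (u v : List (Fin k)) :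
    Σ _ : ℕ, Σ _ : ℕ, List (Fin k) × List (Fin k) × List (Fin k) × List (Fin k) :=
  ⟨(srb u v).length, (slb u v).length,
    (srb u v, slb u v,
     (u.drop (slb u v).length).take (n - (srb u v).length - (slb u v).length),
     (v.drop (srb u v).length).take (n - (srb u v).length - (slb u v).length))⟩

def GA (t : Σ _ : ℕ, Σ _ : ℕ, List (Fin k) × List (Fin k) × List (Fin k) × List (Fin k)) :
    List (Fin k) × List (Fin k) :=
  (t.2.2.2.1 ++ t.2.2.2.2.1 ++ t.2.2.1, t.2.2.1 ++ t.2.2.2.2.2 ++ t.2.2.2.1)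

lemma keyA {n : ℕ} {x y a b : List (Fin k)} (hx : Unbordered x) (hy : Unbordered y)
    (hx0 : x ≠ []) (hy0 : y ≠ []) (hl : (y ++ a ++ x).length = n)
    (hl2 : (x ++ b ++ y).length = n) :
    IsRightBorder (y ++ a ++ x) (x ++ b ++ y) x ∧
    IsLeftBorder (y ++ a ++ x) (x ++ b ++ y) y ∧
    srb (y ++ a ++ x) (x ++ b ++ y) = x ∧ slb (y ++ a ++ x) (x ++ b ++ y) = y := by
  have hxp := List.length_pos_iff.2 hx0
  have hyp := List.length_pos_iff.2 hy0
  simp only [List.length_append] at hl hl2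
  have hrb : IsRightBorder (y ++ a ++ x) (x ++ b ++ y) x := by
    refine ⟨hx0, List.suffix_append _ _, ?_, ?_, ?_⟩
    · intro h; apply_fun List.length at h
      simp only [List.length_append] at h; omega
    · rw [List.append_assoc]; exact List.prefix_append _ _
    · intro h; apply_fun List.length at h
      simp only [List.length_append] at h; omega
  have hlb : IsLeftBorder (y ++ a ++ x) (x ++ b ++ y) y := by
    refine ⟨hy0, ?_, ?_, List.suffix_append _ _, ?_⟩
    · rw [List.append_assoc]; exact List.prefix_append _ _
    · intro h; apply_fun List.length at h
      simp only [List.length_append] at h; omega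
    · intro h; apply_fun List.length at h
      simp only [List.length_append] at h; omega
  exact ⟨hrb, hlb, srb_eq hrb hx, slb_eq hlb hy⟩

lemma cardA {n : ℕ} (hn : 1 ≤ n) :
    (((Words k n ×ˢ Words k n).filter fun q =>
        MutuallyBordered q.1 q.2 ∧ (srb q.1 q.2).length + (slb q.1 q.2).length ≤ n)).card
      = (TA k n).card := by
  refine Finset.card_bij' (fun a _ => FA n a.1 a.2) (fun t _ => GA t) ?_ ?_ ?_ ?_
  · -- forward membership
    rintro ⟨u, v⟩ ha
    simp only [Finset.mem_filter, Finset.mem_product, mem_words] at ha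
    obtain ⟨⟨hu, hv⟩, hmb, hC⟩ := ha
    have hxs := srb_spec hmb.1
    have hys := slb_spec hmb.2
    obtain ⟨hx0, hxu, hxnu, hxv, hxnv⟩ := hxs.1
    obtain ⟨hy0, hyu, hynu, hyv, hynv⟩ := hys.1
    have hxl : (srb u v).length ≤ n := hu ▸ hxu.length_le
    have hxlt : (srb u v).length < n :=
      lt_of_le_of_ne hxl (fun h => hxnu (hxu.eq_of_length (by omega)))
    have hylt : (slb u v).length < n := by
      have h1 : (slb u v).length ≤ n := hu ▸ hyu.length_le
      exact lt_of_le_of_ne h1 (fun h => hynu (hyu.eq_of_length (by omega)))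
    have hxp := List.length_pos_iff.2 hx0
    have hyp := List.length_pos_iff.2 hy0
    simp only [FA, TA, Finset.mem_sigma, Finset.mem_Icc, Finset.mem_product,
      Finset.mem_filter, mem_words, List.length_take, List.length_drop, hu, hv]
    refine ⟨⟨by omega, by omega⟩, ⟨by omega, by omega⟩, ⟨trivial, unbordered_of_shortest_rb hxs⟩,
      ⟨trivial, unbordered_of_shortest_lb hys⟩, by omega, by omega⟩
  · -- backward membership
    rintro ⟨i, j, x, y, a, b⟩ ht
    simp only [TA, Finset.mem_sigma, Finset.mem_Icc, Finset.mem_product, Finset.mem_filter,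
      mem_words] at ht
    obtain ⟨⟨hi1, hi2⟩, ⟨hj1, hj2⟩, ⟨hxw, hxu⟩, ⟨hyw, hyu⟩, haw, hbw⟩ := ht
    have hx0 : x ≠ [] := by intro h; rw [h] at hxw; simp at hxw; omega
    have hy0 : y ≠ [] := by intro h; rw [h] at hyw; simp at hyw; omega
    have hul : (y ++ a ++ x).length = n := by
      simp only [List.length_append, hxw, hyw, haw]; omega
    have hvl : (x ++ b ++ y).length = n := by
      simp only [List.length_append, hxw, hyw, hbw]; omega
    obtain ⟨hrb, hlb, hs, hl⟩ := keyA hxu hyu hx0 hy0 hul hvl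
    show (y ++ a ++ x, x ++ b ++ y) ∈ _
    simp only [Finset.mem_filter, Finset.mem_product, mem_words]
    exact ⟨⟨hul, hvl⟩, ⟨⟨x, hrb⟩, ⟨y, hlb⟩⟩, by rw [hs, hl]; omega⟩
  · -- left inverse
    rintro ⟨u, v⟩ ha
    simp only [Finset.mem_filter, Finset.mem_product, mem_words] at ha
    obtain ⟨⟨hu, hv⟩, hmb, hC⟩ := ha
    have hxs := srb_spec hmb.1
    have hys := slb_spec hmb.2
    obtain ⟨hx0, hxu, hxnu, hxv, hxnv⟩ := hxs.1
    obtain ⟨hy0, hyu, hynu, hyv, hynv⟩ := hys.1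
    have hxl : (srb u v).length ≤ n := hu ▸ hxu.length_le
    have hyl : (slb u v).length ≤ n := hu ▸ hyu.length_le
    show GA (FA n u v) = (u, v)
    simp only [GA, FA]
    refine Prod.ext ?_ ?_
    · exact recompose hu hyu hxu (by omega)
    · exact recompose hv hxv hyv (by omega)
  · -- right inverse
    rintro ⟨i, j, x, y, a, b⟩ ht
    simp only [TA, Finset.mem_sigma, Finset.mem_Icc, Finset.mem_product, Finset.mem_filter,
      mem_words] at ht
    obtain ⟨⟨hi1, hi2⟩, ⟨hj1, hj2⟩, ⟨hxw, hxu⟩, ⟨hyw, hyu⟩, haw, hbw⟩ := ht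
    have hx0 : x ≠ [] := by intro h; rw [h] at hxw; simp at hxw; omega
    have hy0 : y ≠ [] := by intro h; rw [h] at hyw; simp at hyw; omega
    have hul : (y ++ a ++ x).length = n := by
      simp only [List.length_append, hxw, hyw, haw]; omega
    have hvl : (x ++ b ++ y).length = n := by
      simp only [List.length_append, hxw, hyw, hbw]; omega
    obtain ⟨hrb, hlb, hs, hl⟩ := keyA hxu hyu hx0 hy0 hul hvl
    show FA n (y ++ a ++ x) (x ++ b ++ y) = ⟨i, j, (x, y, a, b)⟩
    simp only [FA, hs, hl]
    subst hxw; subst hyw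
    have ha' : ((y ++ a ++ x).drop y.length).take (n - x.length - y.length) = a := by
      rw [List.append_assoc, List.drop_left]
      exact List.take_left' haw
    have hb' : ((x ++ b ++ y).drop x.length).take (n - x.length - y.length) = b := by
      rw [List.append_assoc, List.drop_left]
      exact List.take_left' hbw
    rw [ha', hb']

lemma keyB {n p : ℕ} {u v A B : List (Fin k)} (hu : u.length = n) (hv : v.length = n)
    (hA : A = srb u v) (hB : B = slb u v) (hmb : MutuallyBordered u v)
    (hov : n < A.length + B.length) (hp : p = A.length + B.length - n) :
    (A.drop (A.length - p)).length = p ∧ (A.take p).length = p ∧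
    A.drop (A.length - p) ≠ A.take p ∧
    MutuallyUnbordered (A.drop (A.length - p)) (A.take p) ∧
    2 * p ≤ A.length ∧ 2 * p ≤ B.length ∧ 1 ≤ p ∧
    A.length < n ∧ B.length < n ∧
    Unbordered A ∧ Unbordered B ∧
    (A.take p <+: A) ∧ (A.drop (A.length - p) <:+ A) ∧
    (A.drop (A.length - p) <+: B) ∧ (A.take p <:+ B) ∧
    B ++ A.drop p = u ∧ A ++ B.drop p = v := by
  have hαs := srb_spec hmb.1
  have hβs := slb_spec hmb.2
  rw [← hA] at hαs
  rw [← hB] at hβs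
  obtain ⟨hα0, hαu, hαnu, hαv, hαnv⟩ := hαs.1
  obtain ⟨hβ0, hβu, hβnu, hβv, hβnv⟩ := hβs.1
  have hαub := unbordered_of_shortest_rb hαs
  have hβub := unbordered_of_shortest_lb hβs
  have hln : A.length < n :=
    lt_of_le_of_ne (hu ▸ hαu.length_le) (fun h => hαnu (hαu.eq_of_length (by omega)))
  have hjn : B.length < n := by
    have h1 : B.length ≤ n := hu ▸ hβu.length_le
    exact lt_of_le_of_ne h1 (fun h => hβnu (hβu.eq_of_length (by omega)))
  have hp1 : 1 ≤ p := by omega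
  have hpl : p < A.length := by omega
  have hpj : p < B.length := by omega
  -- representations
  have hAd : u.drop (n - A.length) = A := by
    have h := List.suffix_iff_eq_drop.1 hαu; rw [hu] at h; exact h.symm
  have hAt : v.take A.length = A := (List.prefix_iff_eq_take.1 hαv).symm
  have hBt : u.take B.length = B := (List.prefix_iff_eq_take.1 hβu).symm
  have hBd : v.drop (n - B.length) = B := by
    have h := List.suffix_iff_eq_drop.1 hβv; rw [hv] at h; exact h.symm
  -- the two overlap words
  have hyB : B.drop (B.length - p) = A.take p := by
    calc B.drop (B.length - p)
        = (u.take B.length).drop (B.length - p) := by rw [hBt]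
      _ = (u.drop (B.length - p)).take (B.length - (B.length - p)) := List.drop_take ..
      _ = (u.drop (n - A.length)).take p := by
          rw [show B.length - (B.length - p) = p from by omega,
            show B.length - p = n - A.length from by omega]
      _ = A.take p := by rw [hAd]
  have hxB : B.take p = A.drop (A.length - p) := by
    calc B.take p
        = (v.drop (n - B.length)).take p := by rw [hBd]
      _ = (v.drop (A.length - p)).take (A.length - (A.length - p)) := by
          rw [show A.length - (A.length - p) = p from by omega,
            show A.length - p = n - B.length from by omega]
      _ = (v.take A.length).drop (A.length - p) := (List.drop_take ..).symm
      _ = A.drop (A.length - p) := by rw [hAt]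
  have hyBs : A.take p <:+ B := hyB ▸ List.drop_suffix _ _
  have hxBp : A.drop (A.length - p) <+: B := hxB ▸ List.take_prefix _ _
  have hXl : (A.drop (A.length - p)).length = p := by
    simp only [List.length_drop]; omega
  have hYl : (A.take p).length = p := by
    simp only [List.length_take]; omega
  -- the overlaps cannot overlap
  have h2pl : 2 * p ≤ A.length := by
    by_contra hcon
    push_neg at hcon
    apply hβub ((A.take p).drop (A.length - p))
    have hg : (A.take p).drop (A.length - p)
        = (A.drop (A.length - p)).take (p - (A.length - p)) := List.drop_take ..
    refine ⟨?_, ?_, ?_, ?_⟩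
    · intro h0; apply_fun List.length at h0
      simp only [List.length_drop, List.length_take, List.length_nil] at h0; omega
    · intro h0; apply_fun List.length at h0
      simp only [List.length_drop, List.length_take] at h0; omega
    · rw [hg]; exact (List.take_prefix _ _).trans hxBp
    · exact (List.drop_suffix _ _).trans hyBs
  have h2pj : 2 * p ≤ B.length := by
    by_contra hcon
    push_neg at hcon
    apply hαub ((B.take p).drop (B.length - p))
    have hg : (B.take p).drop (B.length - p)
        = (B.drop (B.length - p)).take (p - (B.length - p)) := List.drop_take ..
    refine ⟨?_, ?_, ?_, ?_⟩
    · intro h0; apply_fun List.length at h0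
      simp only [List.length_drop, List.length_take, List.length_nil] at h0; omega
    · intro h0; apply_fun List.length at h0
      simp only [List.length_drop, List.length_take] at h0; omega
    · rw [hg, hyB]; exact (List.take_prefix _ _).trans (List.take_prefix _ _)
    · rw [hxB]; exact (List.drop_suffix _ _).trans (List.drop_suffix _ _)
  have hxy : A.drop (A.length - p) ≠ A.take p := by
    intro h
    apply hαub (A.take p)
    refine ⟨?_, ?_, List.take_prefix _ _, ?_⟩
    · intro h0; apply_fun List.length at h0
      simp only [List.length_take, List.length_nil] at h0; omega
    · intro h0; apply_fun List.length at h0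
      simp only [List.length_take] at h0; omega
    · rw [← h]; exact List.drop_suffix _ _
  have hmu : MutuallyUnbordered (A.drop (A.length - p)) (A.take p) := by
    constructor
    · rintro ⟨b, hb0, hbs, hbnx, hbp, hbny⟩
      apply hαub b
      refine ⟨hb0, ?_, hbp.trans (List.take_prefix _ _), hbs.trans (List.drop_suffix _ _)⟩
      intro hbA
      have hle := hbs.length_le
      rw [hbA, hXl] at hle; omega
    · rintro ⟨b, hb0, hbp, hbnx, hbs, hbny⟩
      apply hβub b
      refine ⟨hb0, ?_, hbp.trans hxBp, hbs.trans hyBs⟩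
      intro hbB
      have hle := hbp.length_le
      rw [hbB, hXl] at hle; omega
  have hrecu : B ++ A.drop p = u := by
    rw [← hBt, ← hAd, List.drop_drop,
      show n - A.length + p = B.length from by omega, List.take_append_drop]
  have hrecv : A ++ B.drop p = v := by
    rw [← hAt, ← hBd, List.drop_drop,
      show n - B.length + p = A.length from by omega, List.take_append_drop]
  exact ⟨hXl, hYl, hxy, hmu, h2pl, h2pj, hp1, hln, hjn, hαub, hβub,
    List.take_prefix _ _, List.drop_suffix _ _, hxBp, hyBs, hrecu, hrecv⟩


lemma keyB' {n p : ℕ} {x y A B : List (Fin k)} (hp1 : 1 ≤ p)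
    (hxl : x.length = p) (hyl : y.length = p)
    (hBl : B.length = n - A.length + p) (h2p : 2 * p ≤ A.length) (hlp : A.length ≤ n - p)
    (hpn : 3 * p ≤ n)
    (hαub : Unbordered A) (hβub : Unbordered B)
    (hyα : y <+: A) (hxα : x <:+ A) (hxβ : x <+: B) (hyβ : y <:+ B) :
    (B ++ A.drop p).length = n ∧ (A ++ B.drop p).length = n ∧
    IsRightBorder (B ++ A.drop p) (A ++ B.drop p) A ∧
    IsLeftBorder (B ++ A.drop p) (A ++ B.drop p) B ∧
    srb (B ++ A.drop p) (A ++ B.drop p) = A ∧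
    slb (B ++ A.drop p) (A ++ B.drop p) = B := by
  have hAln : A.length ≤ n := by omega
  have hBln : B.length < n := by omega
  have hAlt : A.length < n := by omega
  have hul : (B ++ A.drop p).length = n := by
    simp only [List.length_append, List.length_drop]; omega
  have hvl : (A ++ B.drop p).length = n := by
    simp only [List.length_append, List.length_drop]; omega
  -- A is a suffix of u
  have htakeA : A.take p = y := by rw [← hyl]; exact (List.prefix_iff_eq_take.1 hyα).symm
  have hdropB : B.drop (B.length - p) = y := by
    have h := List.suffix_iff_eq_drop.1 hyβ
    rw [hyl] at h; exact h.symm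
  have hAu : A <:+ B ++ A.drop p := by
    have h1 : B ++ A.drop p = B.take (B.length - p) ++ A := by
      conv_lhs => rw [← List.take_append_drop (B.length - p) B]
      rw [hdropB, List.append_assoc, ← htakeA, List.take_append_drop]
    rw [h1]; exact List.suffix_append _ _
  -- B is a suffix of v
  have htakeB : B.take p = x := by rw [← hxl]; exact (List.prefix_iff_eq_take.1 hxβ).symm
  have hdropA : A.drop (A.length - p) = x := by
    have h := List.suffix_iff_eq_drop.1 hxα
    rw [hxl] at h; exact h.symm
  have hBv : B <:+ A ++ B.drop p := by
    have h1 : A ++ B.drop p = A.take (A.length - p) ++ B := by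
      conv_lhs => rw [← List.take_append_drop (A.length - p) A]
      rw [hdropA, List.append_assoc, ← htakeB, List.take_append_drop]
    rw [h1]; exact List.suffix_append _ _
  have hA0 : A ≠ [] := by
    intro h0; rw [h0] at h2p; simp at h2p; omega
  have hB0 : B ≠ [] := by
    intro h0; apply_fun List.length at h0; simp only [List.length_nil] at h0; omega
  have hrb : IsRightBorder (B ++ A.drop p) (A ++ B.drop p) A := by
    refine ⟨hA0, hAu, ?_, List.prefix_append _ _, ?_⟩
    · intro h0; apply_fun List.length at h0; rw [hul] at h0; omega
    · intro h0; apply_fun List.length at h0; rw [hvl] at h0; omega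
  have hlb : IsLeftBorder (B ++ A.drop p) (A ++ B.drop p) B := by
    refine ⟨hB0, List.prefix_append _ _, ?_, hBv, ?_⟩
    · intro h0; apply_fun List.length at h0; rw [hul] at h0; omega
    · intro h0; apply_fun List.length at h0; rw [hvl] at h0; omega
  exact ⟨hul, hvl, hrb, hlb, srb_eq hrb hαub, slb_eq hlb hβub⟩

noncomputable def TB (k n : ℕ) :
    Finset (Σ _ : ℕ, Σ _ : List (Fin k) × List (Fin k), Σ _ : ℕ, List (Fin k) × List (Fin k)) :=
  (Finset.Icc 1 (n/3)).sigma fun p =>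
    ((Words k p ×ˢ Words k p).filter fun q => q.1 ≠ q.2 ∧ MutuallyUnbordered q.1 q.2).sigma fun q =>
      (Finset.Icc (2*p) (n-p)).sigma fun l =>
        ((Words k l).filter fun w => Unbordered w ∧ q.2 <+: w ∧ q.1 <:+ w) ×ˢ
        ((Words k (n-l+p)).filter fun w => Unbordered w ∧ q.1 <+: w ∧ q.2 <:+ w)

noncomputable def FB (n : ℕ) (u v : List (Fin k)) :
    Σ _ : ℕ, Σ _ : List (Fin k) × List (Fin k), Σ _ : ℕ, List (Fin k) × List (Fin k) :=
  ⟨(srb u v).length + (slb u v).length - n,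
   ((srb u v).drop ((srb u v).length - ((srb u v).length + (slb u v).length - n)),
    (srb u v).take ((srb u v).length + (slb u v).length - n)),
   (srb u v).length, (srb u v, slb u v)⟩

def GB (t : Σ _ : ℕ, Σ _ : List (Fin k) × List (Fin k), Σ _ : ℕ, List (Fin k) × List (Fin k)) :
    List (Fin k) × List (Fin k) :=
  (t.2.2.2.2 ++ t.2.2.2.1.drop t.1, t.2.2.2.1 ++ t.2.2.2.2.drop t.1)

lemma cardB {n : ℕ} (hn : 1 ≤ n) :
    (((Words k n ×ˢ Words k n).filter fun q =>
        MutuallyBordered q.1 q.2 ∧ ¬ ((srb q.1 q.2).length + (slb q.1 q.2).length ≤ n))).card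
      = (TB k n).card := by
  refine Finset.card_bij' (fun a _ => FB n a.1 a.2) (fun t _ => GB t) ?_ ?_ ?_ ?_
  · -- forward membership
    rintro ⟨u, v⟩ ha
    simp only [Finset.mem_filter, Finset.mem_product, mem_words, not_le] at ha
    obtain ⟨⟨hu, hv⟩, hmb, hov⟩ := ha
    obtain ⟨hXl, hYl, hxy, hmu, h2pl, h2pj, hp1, hln, hjn, hαub, hβub,
      hyα, hxα, hxβ, hyβ, hrecu, hrecv⟩ := keyB hu hv rfl rfl hmb hov rfl
    simp only [FB, TB, Finset.mem_sigma, Finset.mem_Icc, Finset.mem_product,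
      Finset.mem_filter, mem_words]
    refine ⟨⟨hp1, ?_⟩, ⟨⟨hXl, hYl⟩, hxy, hmu⟩, ⟨by omega, by omega⟩,
      ⟨⟨trivial, hαub, hyα, hxα⟩, ⟨?_, hβub, hxβ, hyβ⟩⟩⟩
    · exact (Nat.le_div_iff_mul_le (by norm_num)).2 (by omega)
    · omega
  · -- backward membership
    rintro ⟨p, ⟨x, y⟩, l, A, B⟩ ht
    simp only [TB, Finset.mem_sigma, Finset.mem_Icc, Finset.mem_product, Finset.mem_filter,
      mem_words] at ht
    obtain ⟨⟨hp1, hp3⟩, ⟨⟨hxw, hyw⟩, hxy, hmu⟩, ⟨h2pl, hlp⟩,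
      ⟨hAw, hαub, hyα, hxα⟩, ⟨hBw, hβub, hxβ, hyβ⟩⟩ := ht
    have hpn : 3 * p ≤ n := by
      have := (Nat.le_div_iff_mul_le (show 0 < 3 by norm_num)).1 hp3; omega
    obtain ⟨hul, hvl, hrb, hlb, hs, hl⟩ :=
      keyB' hp1 hxw hyw (by omega) (by omega) (by omega) hpn hαub hβub hyα hxα hxβ hyβ
    show (B ++ A.drop p, A ++ B.drop p) ∈ _
    simp only [Finset.mem_filter, Finset.mem_product, mem_words, not_le]
    exact ⟨⟨hul, hvl⟩, ⟨⟨A, hrb⟩, ⟨B, hlb⟩⟩, by rw [hs, hl]; omega⟩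
  · -- left inverse
    rintro ⟨u, v⟩ ha
    simp only [Finset.mem_filter, Finset.mem_product, mem_words, not_le] at ha
    obtain ⟨⟨hu, hv⟩, hmb, hov⟩ := ha
    obtain ⟨hXl, hYl, hxy, hmu, h2pl, h2pj, hp1, hln, hjn, hαub, hβub,
      hyα, hxα, hxβ, hyβ, hrecu, hrecv⟩ := keyB hu hv rfl rfl hmb hov rfl
    show GB (FB n u v) = (u, v)
    simp only [GB, FB]
    exact Prod.ext hrecu hrecv
  · -- right inverse
    rintro ⟨p, ⟨x, y⟩, l, A, B⟩ ht
    simp only [TB, Finset.mem_sigma, Finset.mem_Icc, Finset.mem_product, Finset.mem_filter,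
      mem_words] at ht
    obtain ⟨⟨hp1, hp3⟩, ⟨⟨hxw, hyw⟩, hxy, hmu⟩, ⟨h2pl, hlp⟩,
      ⟨hAw, hαub, hyα, hxα⟩, ⟨hBw, hβub, hxβ, hyβ⟩⟩ := ht
    have hpn : 3 * p ≤ n := by
      have := (Nat.le_div_iff_mul_le (show 0 < 3 by norm_num)).1 hp3; omega
    obtain ⟨hul, hvl, hrb, hlb, hs, hl⟩ :=
      keyB' hp1 hxw hyw (by omega) (by omega) (by omega) hpn hαub hβub hyα hxα hxβ hyβ
    show FB n (B ++ A.drop p) (A ++ B.drop p) = ⟨p, (x, y), l, (A, B)⟩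
    simp only [FB, hs, hl]
    have e0 : A.length + B.length - n = p := by omega
    rw [e0, hAw]
    have ex : A.drop (l - p) = x := by
      have h := List.suffix_iff_eq_drop.1 hxα
      rw [hxw, hAw] at h; exact h.symm
    have ey : A.take p = y := by
      rw [← hyw]; exact (List.prefix_iff_eq_take.1 hyα).symm
    rw [ex, ey]


end Aux

open Aux

theorem stmt8 (k n : ℕ) (hk : 1 ≤ k) (hn : 1 ≤ n) :
    M k n =
      (∑ i ∈ Finset.Icc 1 (n - 1), ∑ j ∈ Finset.Icc 1 (n - i),
        UB k i * UB k j * k ^ (2 * n - 2 * (i + j))) +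
      (∑ p ∈ Finset.Icc 1 (n / 3),
        ∑ q ∈ (Words k p ×ˢ Words k p).filter
            (fun q => q.1 ≠ q.2 ∧ MutuallyUnbordered q.1 q.2),
          ∑ l ∈ Finset.Icc (2 * p) (n - p),
            G q.2 q.1 l * G q.1 q.2 (n - l + p)) ∧
    M k 1 = 0 := by
  constructor
  · have hsplit :
        M k n =
          (((Words k n ×ˢ Words k n).filter fun q =>
            MutuallyBordered q.1 q.2 ∧ (srb q.1 q.2).length + (slb q.1 q.2).length ≤ n)).card +
          (((Words k n ×ˢ Words k n).filter fun q =>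
            MutuallyBordered q.1 q.2 ∧
              ¬ ((srb q.1 q.2).length + (slb q.1 q.2).length ≤ n))).card := by
      rw [M, ← Finset.filter_filter, ← Finset.filter_filter,
        Finset.card_filter_add_card_filter_not]
    rw [hsplit, cardA hn, cardB hn]
    congr 1
    · rw [TA, Finset.card_sigma]
      refine Finset.sum_congr rfl fun i hi => ?_
      rw [Finset.card_sigma]
      refine Finset.sum_congr rfl fun j hj => ?_
      simp only [Finset.mem_Icc] at hi hj
      rw [Finset.card_product, Finset.card_product, Finset.card_product, card_words]
      show UB k i * (UB k j * (k ^ (n - i - j) * k ^ (n - i - j)))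
          = UB k i * UB k j * k ^ (2 * n - 2 * (i + j))
      rw [← pow_add, show (n - i - j) + (n - i - j) = 2 * n - 2 * (i + j) from by omega,
        mul_assoc]
    · rw [TB, Finset.card_sigma]
      refine Finset.sum_congr rfl fun p hp => ?_
      rw [Finset.card_sigma]
      refine Finset.sum_congr rfl fun q hq => ?_
      rw [Finset.card_sigma]
      refine Finset.sum_congr rfl fun l hl => ?_
      rw [Finset.card_product]
      rfl
  · rw [M]
    rw [Finset.card_eq_zero, Finset.filter_eq_empty_iff]
    rintro ⟨u, v⟩ hq ⟨⟨b, hb0, hbu, hbnu, hbv, hbnv⟩, -⟩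
    simp only [Finset.mem_product, mem_words] at hq
    have h1 := hbu.length_le
    have h2 : 1 ≤ b.length := List.length_pos_iff.2 hb0
    have h3 : (u, v).1.length = 1 := hq.1
    exact hbnu (hbu.eq_of_length (by omega))
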